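/- (Deterministic content of the microscopic Hopf–Cole transform for ASIP(q,k), Section 5 Proposition.) Let q ∈ (0,1), let k > 0 be real, let h : ℤ → ℝ, let C ∈ ℝ, and define Z(x) := C·q^{−2h(x)}. Set η(y) := h(y) − h(y−1), define the ASIP(q,k) rates c⁺_q(a,b) := (1/(2[2k]_q))·q^{a−b+(2k−1)}·[a−k]_q·[b+k]_q and c⁻_q(a,b) := (1/(2[2k]_q))·q^{a−b−(2k−1)}·[a+k]_q·[b−k]_q, set ν := ([4k]_q/(2[2k]_q) − 1)/ln q, and define Ω(x) := (q² − 1)·c⁺_q(η(x), η(x+1)) + (q⁻² − 1)·c⁻_q(η(x), η(x+1)) + ν·ln q. Then for every x ∈ ℤ one has Ω(x)·Z(x) = ½·(Z(x+1) + Z(x−1) − 2Z(x)). -/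

import Mathlib

/-- The `q`-number `[n]_q = (q^n - q^(-n))/(q - q⁻¹)` for real `n`. -/
noncomputable def qNum (q n : ℝ) : ℝ := (q ^ n - q ^ (-n)) / (q - q⁻¹)

/-- ASIP(q,k) jump rate from `x` to `x+1`, with occupation values `a` at `x`, `b` at `x+1`. -/
noncomputable def cPlusASIP (q k a b : ℝ) : ℝ :=
  (1 / (2 * qNum q (2*k))) * q ^ (a - b + (2*k - 1)) * qNum q (a - k) * qNum q (b + k)

/-- ASIP(q,k) jump rate from `x+1` to `x`, with occupation values `a` at `x`, `b` at `x+1`. -/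
noncomputable def cMinusASIP (q k a b : ℝ) : ℝ :=
  (1 / (2 * qNum q (2*k))) * q ^ (a - b - (2*k - 1)) * qNum q (a + k) * qNum q (b - k)

set_option maxHeartbeats 1000000 in
/-- Deterministic content of the microscopic Hopf–Cole transform for ASIP(q,k):
`Ω(x)·Z(x) = ½ Δ Z(x)`. -/
theorem stmt12 (q : ℝ) (hq : q ∈ Set.Ioo (0:ℝ) 1) (k : ℝ) (hk : 0 < k)
    (h : ℤ → ℝ) (C : ℝ)
    (Z : ℤ → ℝ) (hZ : ∀ x, Z x = C * q ^ (-2 * h x))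
    (η : ℤ → ℝ) (hη : ∀ y, η y = h y - h (y - 1))
    (ν : ℝ) (hν : ν = (qNum q (4*k) / (2 * qNum q (2*k)) - 1) / Real.log q)
    (Ω : ℤ → ℝ)
    (hΩ : ∀ x, Ω x = (q ^ (2:ℝ) - 1) * cPlusASIP q k (η x) (η (x+1))
        + (q ^ (-2:ℝ) - 1) * cMinusASIP q k (η x) (η (x+1)) + ν * Real.log q) :
    ∀ x : ℤ, Ω x * Z x = (1/2) * (Z (x+1) + Z (x-1) - 2 * Z x) := by
  intro x
  have hq0 : (0:ℝ) < q := hq.1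
  have hq1 : q < 1 := hq.2
  have hq0' : q ≠ 0 := ne_of_gt hq0
  have hlog : Real.log q ≠ 0 := by
    have := Real.log_neg hq0 hq1
    linarith
  have hqinv : 1 < q⁻¹ := (one_lt_inv₀ hq0).mpr hq1
  have hDlt : q - q⁻¹ < 0 := by linarith
  have hD : q - q⁻¹ ≠ 0 := ne_of_lt hDlt
  have hKpos : (0:ℝ) < q ^ (k:ℝ) := Real.rpow_pos_of_pos hq0 k
  have hK1 : q ^ (k:ℝ) < 1 := Real.rpow_lt_one hq0.le hq1 hk
  have hKne : q ^ (k:ℝ) ≠ 0 := ne_of_gt hKpos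
  have hPne : q ^ (η x) ≠ 0 := ne_of_gt (Real.rpow_pos_of_pos hq0 _)
  have hQne : q ^ (η (x+1)) ≠ 0 := ne_of_gt (Real.rpow_pos_of_pos hq0 _)
  -- qNum q (2k) is nonzero
  have h2kpos : (0:ℝ) < 2*k := by linarith
  have hr1 : q ^ ((2:ℝ)*k) < 1 := Real.rpow_lt_one hq0.le hq1 h2kpos
  have hr2 : 1 < q ^ (-((2:ℝ)*k)) := Real.one_lt_rpow_of_pos_of_lt_one_of_neg hq0 hq1 (by linarith)
  have hNpos : 0 < qNum q (2*k) := by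
    rw [qNum]
    apply div_pos_of_neg_of_neg _ hDlt
    linarith
  have hNne : qNum q (2*k) ≠ 0 := ne_of_gt hNpos
  have h2N : (2 * qNum q (2*k)) ≠ 0 := by positivity
  have hq2 : q^2 - 1 ≠ 0 := by nlinarith
  have hqa : q*q - 1 ≠ 0 := by nlinarith
  have hqb : 1 - q^2 ≠ 0 := by nlinarith
  have hqc : 1 - q*q ≠ 0 := by nlinarith
  -- relations between h values and η
  have hb : h (x+1) = h x + η (x+1) := by
    have := hη (x+1)
    rw [show (x:ℤ)+1-1 = x by ring] at this
    linarith
  have ha : h (x-1) = h x - η x := by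
    have := hη x; linarith
  -- core identity
  have core : (q ^ (2:ℝ) - 1) * (q ^ (η x - η (x+1) + (2*k-1)) * qNum q (η x - k) * qNum q (η (x+1) + k))
      + (q ^ (-2:ℝ) - 1) * (q ^ (η x - η (x+1) - (2*k-1)) * qNum q (η x + k) * qNum q (η (x+1) - k))
      + qNum q (4*k)
      = (1/2) * ((q ^ (η (x+1)) * q ^ (η (x+1)))⁻¹ + q ^ (η x) * q ^ (η x)) * (2 * qNum q (2*k)) := by
    simp only [qNum]
    rw [show η x - η (x+1) + (2*k - 1) = η x - η (x+1) + (k + k) - 1 by ring,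
        show η x - η (x+1) - (2*k - 1) = η x - η (x+1) - (k + k) + 1 by ring,
        show (4:ℝ)*k = k+k+(k+k) by ring,
        show (2:ℝ)*k = k+k by ring]
    simp only [Real.rpow_add hq0, Real.rpow_sub hq0, Real.rpow_neg hq0.le, Real.rpow_one,
      Real.rpow_two]
    field_simp [hq2, hqa, hqb, hqc]
    ring
  -- closed form for Ω x
  have hOm1 : Ω x = ((q ^ (2:ℝ) - 1) * (q ^ (η x - η (x+1) + (2*k-1)) * qNum q (η x - k) * qNum q (η (x+1) + k))
      + (q ^ (-2:ℝ) - 1) * (q ^ (η x - η (x+1) - (2*k-1)) * qNum q (η x + k) * qNum q (η (x+1) - k))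
      + qNum q (4*k)) / (2 * qNum q (2*k)) - 1 := by
    rw [hΩ x, hν, div_mul_cancel₀ _ hlog]
    simp only [cPlusASIP, cMinusASIP]
    field_simp
    ring
  have hOm2 : Ω x = (1/2) * ((q ^ (η (x+1)) * q ^ (η (x+1)))⁻¹ + q ^ (η x) * q ^ (η x)) - 1 := by
    rw [hOm1, core, mul_div_cancel_right₀ _ h2N]
  -- finish
  rw [hOm2, hZ x, hZ (x+1), hZ (x-1), hb, ha]
  rw [show (-2:ℝ)*(h x + η (x+1)) = -(h x + h x + (η (x+1) + η (x+1))) by ring,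
      show (-2:ℝ)*(h x - η x) = -(h x + h x) + (η x + η x) by ring,
      show (-2:ℝ)*(h x) = -(h x + h x) by ring]
  simp only [Real.rpow_add hq0, Real.rpow_neg hq0.le]
  field_simp
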